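/- For T > 0 and δ ∈ (0,1), let X_{δ,T} and Y_{δ,T} be independent random variables with X_{δ,T} Poisson distributed with mean δ^{−2}T and Y_{δ,T} Poisson distributed with mean (1−δ)δ^{−2}T. Then lim_{T→∞} sup_{δ ∈ (0,1)} E[min(1, (1−δ)^{X_{δ,T} − Y_{δ,T}})] = 0, where (1−δ)^{X−Y} denotes the integer power of the real number 1−δ ∈ (0,1) with (possibly negative) integer exponent X − Y. -/

import Mathlib

open MeasureTheory ProbabilityTheory Filter
open scoped NNReal ENNReal

lemma hasSum_pow_mul_poissonPMFReal (r : ℝ≥0) (c : ℝ) :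
    HasSum (fun n : ℕ => c ^ n * poissonPMFReal r n) (Real.exp ((r : ℝ) * (c - 1))) := by
  have h : HasSum (fun n : ℕ => (c * r) ^ n / n.factorial) (Real.exp (c * r)) := by
    rw [Real.exp_eq_exp_ℝ]; exact NormedSpace.expSeries_div_hasSum_exp (c * (r : ℝ))
  have hfun : (fun n : ℕ => c ^ n * poissonPMFReal r n)
      = fun n : ℕ => Real.exp (-(r : ℝ)) * ((c * r) ^ n / n.factorial) := by
    funext n
    unfold poissonPMFReal
    rw [mul_pow]; ring
  have hval : Real.exp ((r : ℝ) * (c - 1)) = Real.exp (-(r : ℝ)) * Real.exp (c * r) := by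
    rw [← Real.exp_add]; congr 1; ring
  rw [hfun, hval]
  exact h.mul_left _

lemma poissonMeasure_singleton (r : ℝ≥0) (n : ℕ) :
    poissonMeasure r {n} = ENNReal.ofReal (poissonPMFReal r n) := by
  rw [ProbabilityTheory.poissonMeasure_singleton]
  rfl

lemma integrable_pow_poisson (r : ℝ≥0) {c : ℝ} (hc : 0 ≤ c) :
    Integrable (fun n : ℕ => c ^ n) (poissonMeasure r) := by
  have hsum := (hasSum_pow_mul_poissonPMFReal r c).summable
  refine ⟨measurable_from_nat.aestronglyMeasurable, ?_⟩
  rw [HasFiniteIntegral, lintegral_countable']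
  have heq : ∀ n : ℕ, (‖c ^ n‖₊ : ℝ≥0∞) * poissonMeasure r {n}
      = ENNReal.ofReal (c ^ n * poissonPMFReal r n) := by
    intro n
    rw [_root_.poissonMeasure_singleton, ← enorm_eq_nnnorm, Real.enorm_eq_ofReal (by positivity),
      ← ENNReal.ofReal_mul (by positivity)]
  calc ∑' n : ℕ, (‖c ^ n‖₊ : ℝ≥0∞) * poissonMeasure r {n}
      = ∑' n : ℕ, ENNReal.ofReal (c ^ n * poissonPMFReal r n) := by
        exact tsum_congr heq
    _ = ENNReal.ofReal (∑' n : ℕ, c ^ n * poissonPMFReal r n) :=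
        (ENNReal.ofReal_tsum_of_nonneg
          (fun n => mul_nonneg (by positivity) poissonPMFReal_nonneg) hsum).symm
    _ < ⊤ := ENNReal.ofReal_lt_top

lemma integral_pow_poisson (r : ℝ≥0) {c : ℝ} (hc : 0 ≤ c) :
    ∫ n, c ^ n ∂(poissonMeasure r) = Real.exp ((r : ℝ) * (c - 1)) := by
  rw [integral_countable' (integrable_pow_poisson r hc),
    ← (hasSum_pow_mul_poissonPMFReal r c).tsum_eq]
  apply tsum_congr
  intro n
  rw [measureReal_def, _root_.poissonMeasure_singleton, ENNReal.toReal_ofReal poissonPMFReal_nonneg, smul_eq_mul,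
    mul_comm]

lemma aemeasurable_of_map_poisson {Ω : Type*} [MeasurableSpace Ω] {P : Measure Ω}
    {X : Ω → ℕ} {r : ℝ≥0} (h : Measure.map X P = poissonMeasure r) :
    AEMeasurable X P := by
  by_contra hc
  have h1 : (poissonMeasure r) Set.univ = 1 := measure_univ
  rw [← h, Measure.map_of_not_aemeasurable hc] at h1
  simp at h1

lemma key_bound {Ω : Type*} [MeasurableSpace Ω] (P : Measure Ω) [IsProbabilityMeasure P]
    (X Y : Ω → ℕ) {δ T : ℝ} (hδ : δ ∈ Set.Ioo (0 : ℝ) 1) (hT : 0 < T)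
    (hind : IndepFun X Y P)
    (hX : Measure.map X P = poissonMeasure (Real.toNNReal ((δ ^ 2)⁻¹ * T)))
    (hY : Measure.map Y P = poissonMeasure (Real.toNNReal ((1 - δ) * ((δ ^ 2)⁻¹ * T)))) :
    ∫ ω, min 1 ((1 - δ) ^ ((X ω : ℤ) - (Y ω : ℤ))) ∂P ≤ Real.exp (-(T / 4)) := by
  obtain ⟨hδ0, hδ1⟩ := hδ
  have h1δ : (0 : ℝ) < 1 - δ := by linarith
  set a : ℝ := Real.sqrt (1 - δ) with ha_def
  have ha0 : 0 < a := Real.sqrt_pos.mpr h1δ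
  have ha2 : a * a = 1 - δ := Real.mul_self_sqrt h1δ.le
  have ha1 : a < 1 := by
    nlinarith
  have hane : a ≠ 0 := ha0.ne'
  -- measurability
  have hXm : AEMeasurable X P := aemeasurable_of_map_poisson hX
  have hYm : AEMeasurable Y P := aemeasurable_of_map_poisson hY
  set L : ℝ := (δ ^ 2)⁻¹ * T with hL_def
  have hL0 : 0 ≤ L := by positivity
  have hML0 : 0 ≤ (1 - δ) * L := by positivity
  -- integrability of a^X and (a⁻¹)^Y
  have hfX : Integrable (fun ω => a ^ X ω) P := by
    have := (integrable_map_measure (g := fun n : ℕ => a ^ n) (f := X)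
      measurable_from_nat.aestronglyMeasurable hXm).mp
      (hX ▸ integrable_pow_poisson _ ha0.le)
    exact this
  have hgY : Integrable (fun ω => (a⁻¹) ^ Y ω) P := by
    have := (integrable_map_measure (g := fun n : ℕ => (a⁻¹) ^ n) (f := Y)
      measurable_from_nat.aestronglyMeasurable hYm).mp
      (hY ▸ integrable_pow_poisson _ (by positivity))
    exact this
  have hind' : IndepFun (fun ω => a ^ X ω) (fun ω => (a⁻¹) ^ Y ω) P :=
    hind.comp (measurable_from_nat (f := fun n : ℕ => a ^ n))
      (measurable_from_nat (f := fun n : ℕ => (a⁻¹) ^ n))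
  have hprod : Integrable (fun ω => a ^ X ω * (a⁻¹) ^ Y ω) P :=
    hind'.integrable_mul hfX hgY
  -- pointwise bound
  have hpt : ∀ ω, min 1 ((1 - δ) ^ ((X ω : ℤ) - (Y ω : ℤ))) ≤ a ^ X ω * (a⁻¹) ^ Y ω := by
    intro ω
    set k : ℤ := (X ω : ℤ) - (Y ω : ℤ) with hk
    have hbpos : (0 : ℝ) < (1 - δ) ^ k := zpow_pos h1δ _
    have hb_eq : (1 - δ) ^ k = a ^ k * a ^ k := by
      rw [← ha2, mul_zpow]
    have hak_pos : (0 : ℝ) < a ^ k := zpow_pos ha0 _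
    have hmin : min 1 ((1 - δ) ^ k) ≤ a ^ k := by
      rcases le_or_gt ((1 - δ) ^ k) 1 with hle | hlt
      · rw [min_eq_right hle]
        nlinarith [hb_eq]
      · rw [min_eq_left hlt.le]
        nlinarith [hb_eq]
    have hsplit : a ^ k = a ^ X ω * (a⁻¹) ^ Y ω := by
      rw [hk, zpow_sub₀ hane, zpow_natCast, zpow_natCast, div_eq_mul_inv, inv_pow]
    rw [← hsplit]
    exact hmin
  have hmono : ∫ ω, min 1 ((1 - δ) ^ ((X ω : ℤ) - (Y ω : ℤ))) ∂P
      ≤ ∫ ω, a ^ X ω * (a⁻¹) ^ Y ω ∂P := by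
    apply integral_mono_of_nonneg
    · filter_upwards with ω
      exact le_min zero_le_one (zpow_pos h1δ _).le
    · exact hprod
    · filter_upwards with ω
      exact hpt ω
  -- compute the product integral
  have hIX : ∫ ω, a ^ X ω ∂P = Real.exp (L * (a - 1)) := by
    rw [← integral_map hXm (measurable_from_nat (f := fun n : ℕ => a ^ n)).aestronglyMeasurable,
      hX, integral_pow_poisson _ ha0.le, Real.coe_toNNReal _ hL0]
  have hIY : ∫ ω, (a⁻¹) ^ Y ω ∂P = Real.exp ((1 - δ) * L * (a⁻¹ - 1)) := by
    rw [← integral_map hYm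
      (measurable_from_nat (f := fun n : ℕ => (a⁻¹) ^ n)).aestronglyMeasurable,
      hY, integral_pow_poisson _ (by positivity), Real.coe_toNNReal _ hML0]
  have hintmul : ∫ ω, a ^ X ω * (a⁻¹) ^ Y ω ∂P
      = Real.exp (L * (a - 1)) * Real.exp ((1 - δ) * L * (a⁻¹ - 1)) := by
    rw [← hIX, ← hIY]
    exact hind'.integral_mul_eq_mul_integral hfX.aestronglyMeasurable hgY.aestronglyMeasurable
  refine hmono.trans ?_
  rw [hintmul, ← Real.exp_add]
  apply Real.exp_le_exp.mpr
  -- exponent arithmetic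
  have hinv : (1 - δ) * L * (a⁻¹ - 1) = L * (a - (1 - δ)) := by
    rw [← ha2]
    field_simp
  rw [hinv]
  have hexp_eq : L * (a - 1) + L * (a - (1 - δ)) = -(L * (1 - a) ^ 2) := by
    have : δ = 1 - a * a := by linarith [ha2]
    rw [this]; ring
  rw [hexp_eq]
  have hδa : δ / 2 ≤ 1 - a := by
    have hsq : a ≤ 1 - δ / 2 := by
      have h1 : 1 - δ ≤ (1 - δ / 2) ^ 2 := by nlinarith
      calc a = Real.sqrt (1 - δ) := ha_def
        _ ≤ Real.sqrt ((1 - δ / 2) ^ 2) := Real.sqrt_le_sqrt h1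
        _ = 1 - δ / 2 := Real.sqrt_sq (by linarith)
    linarith
  have hLval : L * (δ / 2) ^ 2 = T / 4 := by
    have h2 : (δ : ℝ) ^ 2 ≠ 0 := by positivity
    rw [hL_def]
    calc (δ ^ 2)⁻¹ * T * (δ / 2) ^ 2 = T * (δ ^ 2 * (δ ^ 2)⁻¹) / 4 := by ring
      _ = T / 4 := by rw [mul_inv_cancel₀ h2, mul_one]
  have : T / 4 ≤ L * (1 - a) ^ 2 := by
    rw [← hLval]
    apply mul_le_mul_of_nonneg_left _ hL0
    apply pow_le_pow_left₀ (by positivity) hδa _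
  linarith

theorem poisson_hitting_sup_tendsto_zero
    {Ω : Type*} [MeasurableSpace Ω] (P : Measure Ω) [IsProbabilityMeasure P]
    (X Y : ℝ → ℝ → Ω → ℕ)
    (hXY : ∀ δ ∈ Set.Ioo (0 : ℝ) 1, ∀ T ∈ Set.Ioi (0 : ℝ),
      IndepFun (X δ T) (Y δ T) P ∧
      Measure.map (X δ T) P = poissonMeasure (Real.toNNReal ((δ ^ 2)⁻¹ * T)) ∧
      Measure.map (Y δ T) P = poissonMeasure (Real.toNNReal ((1 - δ) * ((δ ^ 2)⁻¹ * T)))) :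
    Tendsto
      (fun T : ℝ => ⨆ δ ∈ Set.Ioo (0 : ℝ) 1,
        ∫ ω, min 1 ((1 - δ) ^ ((X δ T ω : ℤ) - (Y δ T ω : ℤ))) ∂P)
      atTop (nhds 0) := by
  have hlim : Tendsto (fun T : ℝ => Real.exp (-(T / 4))) atTop (nhds 0) := by
    apply Real.tendsto_exp_atBot.comp
    apply tendsto_neg_atTop_atBot.comp
    exact tendsto_id.atTop_div_const (by norm_num)
  apply squeeze_zero' ?_ ?_ hlim
  · filter_upwards with T
    apply Real.iSup_nonneg
    intro δ
    apply Real.iSup_nonneg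
    intro hδ
    apply integral_nonneg
    intro ω
    exact le_min zero_le_one (zpow_pos (by simp; linarith [hδ.2]) _).le
  · filter_upwards [eventually_gt_atTop (0 : ℝ)] with T hT
    apply ciSup_le
    intro δ
    by_cases hδ : δ ∈ Set.Ioo (0 : ℝ) 1
    · rw [ciSup_pos hδ]
      obtain ⟨hind, hX, hY⟩ := hXY δ hδ T hT
      exact key_bound P (X δ T) (Y δ T) hδ hT hind hX hY
    · haveI : IsEmpty (δ ∈ Set.Ioo (0:ℝ) 1) := ⟨hδ⟩
      rw [Real.iSup_of_isEmpty]
      exact (Real.exp_pos _).le
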